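/- Let A, B : X → 2^{X*} be maximal monotone operators on a real Banach space X with D(A) and D(B) linear subspaces and graphs linear subspaces, and let (x₀, x₀*) be monotonically related to A + B. If there exists y* ∈ X* such that for all x, z ∈ X, x*, z* ∈ X* the inequality α(z, x*) + β(x, z*) + ⟨x₀, x₀*⟩ − ⟨z − x, y*⟩ ≥ 0 holds, where α(z,x*) = ⟨z − x₀, x*⟩ + ι_{graph A}(z,x*) and β(x,z*) = ⟨x − x₀, z*⟩ − ⟨x, x₀*⟩ + ι_{graph B}(x,z*), then x₀* ∈ (A + B)x₀. -/
import Mathlib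


noncomputable section

open scoped Classical

variable {X : Type*} [NormedAddCommGroup X] [NormedSpace ℝ X] [CompleteSpace X]

def IsMonotoneOp (A : Set (X × (X →L[ℝ] ℝ))) : Prop :=
  ∀ p ∈ A, ∀ q ∈ A, 0 ≤ (p.2 - q.2) (p.1 - q.1)

def IsMaximalMonotoneOp (A : Set (X × (X →L[ℝ] ℝ))) : Prop :=
  IsMonotoneOp A ∧ ∀ x₀ : X, ∀ ys : X →L[ℝ] ℝ,
    (∀ p ∈ A, 0 ≤ (p.2 - ys) (p.1 - x₀)) → (x₀, ys) ∈ A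

def alphaFn (A : Set (X × (X →L[ℝ] ℝ))) (x₀ : X) : X × (X →L[ℝ] ℝ) → EReal :=
  fun p => if p ∈ A then ((p.2 (p.1 - x₀) : ℝ) : EReal) else ⊤

def betaFn (A : Set (X × (X →L[ℝ] ℝ))) (x₀ : X) (x₀s : X →L[ℝ] ℝ) :
    X × (X →L[ℝ] ℝ) → EReal :=
  fun p => if p ∈ A then ((p.2 (p.1 - x₀) - x₀s p.1 : ℝ) : EReal) else ⊤

theorem mem_sum_of_dual_ineq (A B : Submodule ℝ (X × (X →L[ℝ] ℝ)))
    (hA : IsMaximalMonotoneOp (A : Set (X × (X →L[ℝ] ℝ))))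
    (hB : IsMaximalMonotoneOp (B : Set (X × (X →L[ℝ] ℝ))))
    (x₀ : X) (x₀s : X →L[ℝ] ℝ)
    (hrel : ∀ x : X, ∀ as bs : X →L[ℝ] ℝ, (x, as) ∈ A → (x, bs) ∈ B →
      0 ≤ (as + bs - x₀s) (x - x₀))
    (hdual : ∃ ys : X →L[ℝ] ℝ, ∀ x z : X, ∀ xs zs : X →L[ℝ] ℝ,
      (0 : EReal) ≤ alphaFn (A : Set (X × (X →L[ℝ] ℝ))) x₀ (z, xs) +
        betaFn (B : Set (X × (X →L[ℝ] ℝ))) x₀ x₀s (x, zs) +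
        ((x₀s x₀ : ℝ) : EReal) - ((ys (z - x) : ℝ) : EReal)) :
    ∃ as bs : X →L[ℝ] ℝ, (x₀, as) ∈ A ∧ (x₀, bs) ∈ B ∧ x₀s = as + bs := by
  obtain ⟨ys, hys⟩ := hdual
  -- Key real inequality: for p ∈ A, q ∈ B,
  -- 0 ≤ (p.2 - ys)(p.1 - x₀) + (q.2 - (x₀s - ys))(q.1 - x₀)
  have key : ∀ p ∈ A, ∀ q ∈ B,
      0 ≤ (p.2 - ys) (p.1 - x₀) + (q.2 - (x₀s - ys)) (q.1 - x₀) := by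
    intro p hp q hq
    have h := hys q.1 p.1 p.2 q.2
    rw [alphaFn, betaFn] at h
    simp only [Prod.mk.eta] at h
    rw [if_pos (show p ∈ (A : Set (X × (X →L[ℝ] ℝ))) from hp),
      if_pos (show q ∈ (B : Set (X × (X →L[ℝ] ℝ))) from hq)] at h
    rw [← EReal.coe_add, ← EReal.coe_add, ← EReal.coe_sub] at h
    rw [EReal.coe_nonneg] at h
    simp only [ContinuousLinearMap.sub_apply, ContinuousLinearMap.add_apply,
      map_sub] at h ⊢
    linarith
  have main : ((x₀, ys) ∈ A) ∧ ((x₀, x₀s - ys) ∈ B) := by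
    by_cases hc : ∀ p ∈ (A : Set (X × (X →L[ℝ] ℝ))), 0 ≤ (p.2 - ys) (p.1 - x₀)
    · have hAmem : (x₀, ys) ∈ A := hA.2 x₀ ys hc
      refine ⟨hAmem, hB.2 x₀ (x₀s - ys) ?_⟩
      intro q hq
      have h := key (x₀, ys) hAmem q hq
      simpa using h
    · push_neg at hc
      obtain ⟨p₀, hp₀, hneg⟩ := hc
      have hBmem : (x₀, x₀s - ys) ∈ B := by
        refine hB.2 x₀ (x₀s - ys) ?_
        intro q hq
        have h := key p₀ hp₀ q hq
        linarith
      refine ⟨hA.2 x₀ ys ?_, hBmem⟩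
      intro p hp
      have h := key p hp (x₀, x₀s - ys) hBmem
      simpa using h
  exact ⟨ys, x₀s - ys, main.1, main.2, by abel⟩
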